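/- arXiv:0909.4009 — 5 statements merged into one kernel-verified Lean document; each statement's English description precedes it below -/
import Mathlib

section
/- For every positive integers r and n, the map sending a colored sequence f = (f_1^{c_1}, ..., f_n^{c_n}) in N_0^{(r,n)} (n-tuples of colored nonnegative integers with colors in {0,...,r-1}, where f_i = 0 forces c_i = 0) to the pair (π(f), λ(f)) is a bijection between N_0^{(r,n)} and G(r,n) × P_n, where G(r,n) = Z_r ≀ S_n, P_n is the set of partitions with at most n parts (nondecreasing sequences of n nonnegative integers), π(f) is the unique colored permutation γ = (c_1,...,c_n;σ) with f_{σ(1)} ≤ ... ≤ f_{σ(n)}, c_i(γ) = c_{σ(i)}(f), and γ(i) < γ(i+1) whenever f_{σ(i)} = f_{σ(i+1)}, and λ(f)_i := f_{σ(i)} - #{j ∈ Des_G(γ) : j ≤ i-1}. -/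
open Finset

namespace Paper

/-- An element of `G(r,n) = ℤ_r ≀ S_n`: a pair (underlying permutation, color vector). -/
abbrev CPerm (r n : ℕ) := Equiv.Perm (Fin n) × (Fin n → Fin r)

/-- A colored sequence: values and colors. -/
abbrev CSeq (r n : ℕ) := (Fin n → ℕ) × (Fin n → Fin r)

variable {r n : ℕ}

/-- The order on colored integers (value, color):
`n^{r-1} < ⋯ < n^1 < ⋯ < 1^{r-1} < ⋯ < 1^1 < 0 < 1 < ⋯ < n`.
`clt a b` means `a < b`. -/
def clt (a b : ℕ × ℕ) : Prop :=
  (0 < a.2 ∧ b.2 = 0) ∨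
  (0 < a.2 ∧ 0 < b.2 ∧ (b.1 < a.1 ∨ (a.1 = b.1 ∧ b.2 < a.2))) ∨
  (a.2 = 0 ∧ b.2 = 0 ∧ a.1 < b.1)

instance (a b : ℕ × ℕ) : Decidable (clt a b) := by unfold clt; exact inferInstance

/-- The colored entry of `γ` at (0-based) position `i`: value `σ(i)` (1-based) with its color. -/
def entry (γ : CPerm r n) (i : Fin n) : ℕ × ℕ := ((γ.1 i : ℕ) + 1, (γ.2 i : ℕ))

/-- Window value `γ(i)` for `i ∈ [0,n]` (1-based positions), with `γ(0) := 0`. -/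
def wval (γ : CPerm r n) (i : ℕ) : ℕ × ℕ :=
  if h : 1 ≤ i ∧ i ≤ n then ((γ.1 ⟨i - 1, by omega⟩ : ℕ) + 1, (γ.2 ⟨i - 1, by omega⟩ : ℕ))
  else (0, 0)

/-- Descent set `Des_G(γ) = {i ∈ [0,n-1] : γ(i) > γ(i+1)}`, with `γ(0) := 0`. -/
def DesG (γ : CPerm r n) : Finset ℕ :=
  (range n).filter fun i => clt (wval γ (i + 1)) (wval γ i)

def desG (γ : CPerm r n) : ℕ := (DesG γ).card

def majG (γ : CPerm r n) : ℕ := ∑ i ∈ DesG γ, i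

def colG (γ : CPerm r n) : ℕ := ∑ i, (γ.2 i : ℕ)

/-- Number of inversions: pairs `i < j` with `γ(i) > γ(j)` in the colored order. -/
def invG (γ : CPerm r n) : ℕ :=
  ((univ : Finset (Fin n × Fin n)).filter fun p =>
    p.1 < p.2 ∧ clt (entry γ p.2) (entry γ p.1)).card

/-- Length `ℓ_G(γ) = inv(γ) + Σ_{c_i ≠ 0} (σ(i) + c_i - 1)` (σ(i) 1-based). -/
def lenG (γ : CPerm r n) : ℕ :=
  invG γ + ∑ i ∈ univ.filter (fun i => (γ.2 i : ℕ) ≠ 0), ((γ.1 i : ℕ) + (γ.2 i : ℕ))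

/-- Membership in `N_0^{(r,n)}`: a zero value has color 0. -/
def ValidSeq (f : CSeq r n) : Prop := ∀ i, f.1 i = 0 → (f.2 i : ℕ) = 0

/-- The defining property of `π(f) = γ = (c;σ)`:
`f_{σ(1)} ≤ … ≤ f_{σ(n)}`, `c_i(γ) = c_{σ(i)}(f)`, and `γ(i) < γ(i+1)` whenever
`f_{σ(i)} = f_{σ(i+1)}`. -/
def isPi (f : CSeq r n) (γ : CPerm r n) : Prop :=
  (∀ i j : Fin n, i ≤ j → f.1 (γ.1 i) ≤ f.1 (γ.1 j)) ∧
  (∀ i, γ.2 i = f.2 (γ.1 i)) ∧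
  (∀ i j : Fin n, (i : ℕ) + 1 = (j : ℕ) → f.1 (γ.1 i) = f.1 (γ.1 j) →
    clt (entry γ i) (entry γ j))

def maxf (f : CSeq r n) : ℕ := univ.sup f.1

def sumf (f : CSeq r n) : ℕ := ∑ i, f.1 i

/-- The partition `λ(f)` (relative to `γ = π(f)`), with values in `ℤ`:
`λ_i = f_{σ(i)} - #{j ∈ Des_G(γ) : j ≤ i-1}` (1-based `i`). -/
def lamZ (f : CSeq r n) (γ : CPerm r n) (i : Fin n) : ℤ :=
  (f.1 (γ.1 i) : ℤ) - ((DesG γ).filter (· ≤ (i : ℕ))).card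

/-- 1-based reading of an `n`-tuple, with value `0` at index `0` (and outside `[1,n]`). -/
def mval (μ : Fin n → ℕ) (i : ℕ) : ℕ :=
  if h : 1 ≤ i ∧ i ≤ n then μ ⟨i - 1, by omega⟩ else 0

/-- `μ` is `γ`-compatible: `μ_i < μ_{i+1}` for all `i ∈ Des_G(γ)` (with `μ_0 := 0`). -/
def compat (μ : Fin n → ℕ) (γ : CPerm r n) : Prop :=
  ∀ i ∈ DesG γ, mval μ i < mval μ (i + 1)

/-- The skew inverse `γ̃⁻¹ = (c_{σ⁻¹(1)},…,c_{σ⁻¹(n)}; σ⁻¹)`. -/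
def skewInv (γ : CPerm r n) : CPerm r n := (γ.1⁻¹, fun i => γ.2 (γ.1⁻¹ i))

/-- The group inverse: `γ⁻¹ = (c'; σ⁻¹)` with `c'_i = (r - c_{σ⁻¹(i)}) mod r`. -/
def cinv (γ : CPerm r n) : CPerm r n :=
  (γ.1⁻¹, fun i =>
    ⟨(r - (γ.2 (γ.1⁻¹ i) : ℕ)) % r,
      Nat.mod_lt _ (Nat.lt_of_le_of_lt (Nat.zero_le _) (γ.2 (γ.1⁻¹ i)).isLt)⟩)

/-- The group law of `G(r,n)`: `(c;σ)·(d;τ) = ((d_i + c_{τ(i)}) mod r; στ)`. -/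
def cmul (x y : CPerm r n) : CPerm r n :=
  (x.1 * y.1, fun i =>
    ⟨((y.2 i : ℕ) + (x.2 (y.1 i) : ℕ)) % r,
      Nat.mod_lt _ (Nat.lt_of_le_of_lt (Nat.zero_le _) (y.2 i).isLt)⟩)

/-- The color-forgetting projection `φ : G(r,n) → B_n = G(2,n)`. -/
def phi (γ : CPerm r n) : CPerm 2 n := (γ.1, fun i => ⟨min (γ.2 i : ℕ) 1, by omega⟩)

/-- `[m]_p = 1 + p + ⋯ + p^{m-1}`. -/
def qint {R : Type*} [CommRing R] (p : R) (m : ℕ) : R := ∑ j ∈ range m, p ^ j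

/-- `[m]_p! = [1]_p [2]_p ⋯ [m]_p`. -/
def qfact {R : Type*} [CommRing R] (p : R) (m : ℕ) : R := ∏ j ∈ range m, qint p (j + 1)

/-- `[m̂]_{b,p}! = (1+bp)(1+bp²)⋯(1+bp^m)·[m]_p!`. -/
def hqfact {R : Type*} [CommRing R] (b p : R) (m : ℕ) : R :=
  (∏ i ∈ range m, (1 + b * p ^ (i + 1))) * qfact p m

/-- A formal power series in two variables `X 0, X 1` from its coefficients. -/
def seriesOf2 (F : ℕ → ℕ → ℚ) : MvPowerSeries (Fin 2) ℚ := fun d => F (d 0) (d 1)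

/-- A formal power series in three variables from its coefficients. -/
def seriesOf3 (F : ℕ → ℕ → ℕ → ℚ) : MvPowerSeries (Fin 3) ℚ := fun d => F (d 0) (d 1) (d 2)


/-! ### Auxiliary lemmas for Statement 0 -/

lemma clt_asymm' {a b : ℕ × ℕ} (h : clt a b) : ¬ clt b a := by
  unfold clt at *; omega

lemma clt_total' {a b : ℕ × ℕ} (h : a.1 ≠ b.1) : clt a b ∨ clt b a := by
  unfold clt; omega

lemma wval_entry (γ : CPerm r n) (i : Fin n) : wval γ ((i : ℕ) + 1) = entry γ i := by
  have hi := i.isLt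
  unfold wval entry
  rw [dif_pos ⟨by omega, by omega⟩]
  simp

lemma wval_zero (γ : CPerm r n) : wval γ 0 = (0, 0) := by
  unfold wval; rw [dif_neg]; omega

lemma clt_zero_right {a : ℕ × ℕ} : clt a (0, 0) ↔ 0 < a.2 := by
  unfold clt; simp

lemma mem_DesG_iff (γ : CPerm r n) (k : ℕ) :
    k ∈ DesG γ ↔ k < n ∧ clt (wval γ (k + 1)) (wval γ k) := by
  simp [DesG]

lemma mem_DesG_succ (γ : CPerm r n) (i j : Fin n) (hij : (i : ℕ) + 1 = (j : ℕ)) :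
    (j : ℕ) ∈ DesG γ ↔ clt (entry γ j) (entry γ i) := by
  rw [mem_DesG_iff]
  have h1 : wval γ ((j : ℕ) + 1) = entry γ j := wval_entry γ j
  have h2 : wval γ (j : ℕ) = entry γ i := by rw [← hij]; exact wval_entry γ i
  simp [h1, h2, j.isLt]

lemma zero_mem_DesG (γ : CPerm r n) (hn : 0 < n) :
    0 ∈ DesG γ ↔ (γ.2 ⟨0, hn⟩ : ℕ) ≠ 0 := by
  rw [mem_DesG_iff]
  have h1 : wval γ 1 = entry γ ⟨0, hn⟩ := by
    simpa using wval_entry γ ⟨0, hn⟩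
  rw [wval_zero, h1]
  have : (entry γ ⟨0, hn⟩).2 = (γ.2 ⟨0, hn⟩ : ℕ) := rfl
  rw [clt_zero_right, this]
  omega

lemma card_filter_le_succ (s : Finset ℕ) (i : ℕ) :
    (s.filter (· ≤ i + 1)).card
      = (s.filter (· ≤ i)).card + (if i + 1 ∈ s then 1 else 0) := by
  have h1 : s.filter (· ≤ i + 1) = s.filter (· ≤ i) ∪ s.filter (· = i + 1) := by
    rw [← Finset.filter_or]
    apply Finset.filter_congr
    intro x _
    constructor
    · intro h; omega
    · intro h; omega
  rw [h1, Finset.card_union_of_disjoint, Finset.filter_eq']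
  · split <;> simp
  · rw [Finset.disjoint_left]
    intro a ha hb
    simp only [Finset.mem_filter] at ha hb
    omega

lemma monotone_of_step {α : Type*} [Preorder α] {m : ℕ} (h : Fin m → α)
    (H : ∀ i j : Fin m, (i : ℕ) + 1 = (j : ℕ) → h i ≤ h j) : Monotone h := by
  have key : ∀ k : ℕ, ∀ i j : Fin m, (i : ℕ) + k = (j : ℕ) → h i ≤ h j := by
    intro k
    induction k with
    | zero => intro i j hij; have : i = j := Fin.ext (by omega); rw [this]
    | succ k ih =>
      intro i j hij
      have hm : (i : ℕ) + k < m := by have := j.isLt; omega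
      exact le_trans (ih i ⟨(i : ℕ) + k, hm⟩ rfl) (H ⟨(i : ℕ) + k, hm⟩ j (by simpa using by omega))
  intro i j hij
  exact key ((j : ℕ) - (i : ℕ)) i j (by have := Fin.le_def.mp hij; omega)

lemma exists_descent_of_color (γ : CPerm r n) :
    ∀ k : ℕ, ∀ hk : k < n, (γ.2 ⟨k, hk⟩ : ℕ) ≠ 0 → ∃ j ∈ DesG γ, j ≤ k := by
  intro k
  induction k with
  | zero =>
    intro hk hc
    exact ⟨0, (zero_mem_DesG γ hk).2 hc, le_refl 0⟩
  | succ k ih =>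
    intro hk hc
    by_cases h0 : (γ.2 ⟨k, by omega⟩ : ℕ) = 0
    · refine ⟨k + 1, ?_, le_refl _⟩
      rw [mem_DesG_succ γ ⟨k, by omega⟩ ⟨k + 1, hk⟩ rfl]
      exact Or.inl ⟨Nat.pos_of_ne_zero hc, h0⟩
    · obtain ⟨j, hj, hjk⟩ := ih (by omega) h0
      exact ⟨j, hj, by omega⟩

lemma strict_of_descent {f : CSeq r n} {γ : CPerm r n} (hpi : isPi f γ)
    (i j : Fin n) (hij : (i : ℕ) + 1 = (j : ℕ)) (hd : (j : ℕ) ∈ DesG γ) :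
    f.1 (γ.1 i) < f.1 (γ.1 j) := by
  rcases lt_or_eq_of_le (hpi.1 i j (Fin.le_def.mpr (by omega))) with h | h
  · exact h
  · exact absurd ((mem_DesG_succ γ i j hij).1 hd) (clt_asymm' (hpi.2.2 i j hij h))

/-- Count of descents `≤ i`. -/
def Dcnt (γ : CPerm r n) (i : ℕ) : ℕ := ((DesG γ).filter (· ≤ i)).card

lemma Dcnt_mono (γ : CPerm r n) {a b : ℕ} (hab : a ≤ b) : Dcnt γ a ≤ Dcnt γ b := by
  apply Finset.card_le_card
  intro x hx
  simp only [Finset.mem_filter] at hx ⊢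
  exact ⟨hx.1, le_trans hx.2 hab⟩

lemma Dcnt_succ (γ : CPerm r n) (i : ℕ) :
    Dcnt γ (i + 1) = Dcnt γ i + (if i + 1 ∈ DesG γ then 1 else 0) :=
  card_filter_le_succ _ _

lemma Dcnt_zero (γ : CPerm r n) :
    Dcnt γ 0 = if 0 ∈ DesG γ then 1 else 0 := by
  unfold Dcnt
  have h1 : (DesG γ).filter (· ≤ 0) = (DesG γ).filter (· = 0) := by
    apply Finset.filter_congr; intro x _; omega
  rw [h1, Finset.filter_eq']
  split <;> simp

lemma lamZ_eq (f : CSeq r n) (γ : CPerm r n) (i : Fin n) :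
    lamZ f γ i = (f.1 (γ.1 i) : ℤ) - (Dcnt γ (i : ℕ) : ℤ) := rfl

/-- Proposition 3.6: the map `f ↦ (π(f), λ(f))` is a bijection between
`N_0^{(r,n)}` and `G(r,n) × P_n`, where `π(f)` is the unique colored permutation associated
with `f` and `λ(f)` is the corresponding partition (nonnegative, nondecreasing). -/
theorem stmt0 (r n : ℕ) (hr : 0 < r) (hn : 0 < n)
    (π : CSeq r n → CPerm r n)
    (hπ : ∀ f, ValidSeq f → isPi f (π f) ∧ ∀ γ, isPi f γ → γ = π f) :
    (∀ f : CSeq r n, ValidSeq f → ∃! γ : CPerm r n, isPi f γ) ∧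
    Set.BijOn (fun f : CSeq r n => (π f, lamZ f (π f)))
      {f : CSeq r n | ValidSeq f}
      {p : CPerm r n × (Fin n → ℤ) | Monotone p.2 ∧ ∀ i, 0 ≤ p.2 i} := by
  constructor
  · -- uniqueness of π
    intro f hf
    exact ⟨π f, (hπ f hf).1, fun γ hγ => (hπ f hf).2 γ hγ⟩
  refine ⟨?_, ?_, ?_⟩
  · -- MapsTo
    intro f hf
    simp only [Set.mem_setOf_eq] at hf ⊢
    set γ := π f with hγdef
    have hpi := (hπ f hf).1
    have hmono : Monotone (lamZ f γ) := by
      apply monotone_of_step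
      intro i j hij
      rw [lamZ_eq, lamZ_eq]
      have h2 : f.1 (γ.1 i) ≤ f.1 (γ.1 j) := hpi.1 i j (Fin.le_def.mpr (by omega))
      have h1 : Dcnt γ (j : ℕ) = Dcnt γ (i : ℕ) + (if (j : ℕ) ∈ DesG γ then 1 else 0) := by
        rw [← hij]; exact Dcnt_succ γ _
      by_cases hd : (j : ℕ) ∈ DesG γ
      · have h3 : f.1 (γ.1 i) < f.1 (γ.1 j) := strict_of_descent hpi i j hij hd
        rw [h1, if_pos hd]
        push_cast
        omega
      · rw [h1, if_neg hd]
        push_cast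
        omega
    refine ⟨hmono, fun i => ?_⟩
    have h0 : 0 ≤ lamZ f γ ⟨0, hn⟩ := by
      rw [lamZ_eq, Dcnt_zero]
      by_cases hd : 0 ∈ DesG γ
      · have hc : (γ.2 ⟨0, hn⟩ : ℕ) ≠ 0 := (zero_mem_DesG γ hn).1 hd
        have hc2 : (f.2 (γ.1 ⟨0, hn⟩) : ℕ) ≠ 0 := by
          rw [← hpi.2.1 ⟨0, hn⟩]; exact hc
        have hf1 : f.1 (γ.1 ⟨0, hn⟩) ≠ 0 := fun h => hc2 (hf _ h)
        rw [if_pos hd]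
        push_cast
        omega
      · rw [if_neg hd]
        push_cast
        omega
    exact le_trans h0 (hmono (Fin.le_def.mpr (by simp)))
  · -- InjOn
    intro f hf g hg heq
    simp only [Set.mem_setOf_eq] at hf hg
    simp only [Prod.mk.injEq] at heq
    obtain ⟨hπeq, hLeq⟩ := heq
    set γ := π f with hγdef
    have hπg : π g = γ := hπeq.symm
    have h1 : ∀ i : Fin n, f.1 (γ.1 i) = g.1 (γ.1 i) := by
      intro i
      have := congrFun hLeq i
      rw [lamZ_eq, hπg, lamZ_eq] at this
      omega
    have hpif := (hπ f hf).1
    have hpig := (hπ g hg).1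
    rw [hπg] at hpig
    have hfg1 : f.1 = g.1 := by
      funext k
      have := h1 (γ.1⁻¹ k)
      simpa using this
    have hfg2 : f.2 = g.2 := by
      funext k
      have ha := hpif.2.1 (γ.1⁻¹ k)
      have hb := hpig.2.1 (γ.1⁻¹ k)
      simp only [← hγdef, Equiv.Perm.inv_def, Equiv.apply_symm_apply] at ha hb
      rw [← ha, ← hb]
    exact Prod.ext hfg1 hfg2
  · -- SurjOn
    rintro ⟨γ, lam⟩ hmem
    simp only [Set.mem_setOf_eq] at hmem
    obtain ⟨hmono, hpos⟩ := hmem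
    set g : Fin n → ℕ := fun i => (lam i).toNat + Dcnt γ (i : ℕ) with hgdef
    set f : CSeq r n := (fun k => g (γ.1⁻¹ k), fun k => γ.2 (γ.1⁻¹ k)) with hfdef
    have hf1 : ∀ i : Fin n, f.1 (γ.1 i) = g i := by
      intro i; simp [hfdef]
    have hvalid : ValidSeq f := by
      intro k hk0
      show (γ.2 (γ.1⁻¹ k) : ℕ) = 0
      by_contra hc
      obtain ⟨j, hj, hjk⟩ := exists_descent_of_color γ (γ.1⁻¹ k) (Fin.is_lt _) (by simpa using hc)
      have hD : 1 ≤ Dcnt γ ((γ.1⁻¹ k : Fin n) : ℕ) :=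
        Finset.card_pos.mpr ⟨j, Finset.mem_filter.mpr ⟨hj, hjk⟩⟩
      have : f.1 k = g (γ.1⁻¹ k) := rfl
      rw [this] at hk0
      simp only [hgdef] at hk0
      omega
    have hgmono : ∀ i j : Fin n, i ≤ j → g i ≤ g j := by
      intro i j hij
      have h1 : (lam i).toNat ≤ (lam j).toNat := Int.toNat_le_toNat (hmono hij)
      have h2 : Dcnt γ (i : ℕ) ≤ Dcnt γ (j : ℕ) := Dcnt_mono γ (Fin.le_def.mp hij)
      simp only [hgdef]
      omega
    have hpi : isPi f γ := by
      refine ⟨?_, ?_, ?_⟩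
      · intro i j hij
        rw [hf1, hf1]
        exact hgmono i j hij
      · intro i
        show γ.2 i = γ.2 (γ.1⁻¹ (γ.1 i))
        simp
      · intro i j hij hfeq
        rw [hf1, hf1] at hfeq
        have h1 : (lam i).toNat ≤ (lam j).toNat :=
          Int.toNat_le_toNat (hmono (Fin.le_def.mpr (by omega)))
        have h2 : Dcnt γ (i : ℕ) ≤ Dcnt γ (j : ℕ) := Dcnt_mono γ (by omega)
        have h3 : Dcnt γ (j : ℕ) = Dcnt γ (i : ℕ) + (if (j : ℕ) ∈ DesG γ then 1 else 0) := by
          rw [← hij]; exact Dcnt_succ γ _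
        have hnd : (j : ℕ) ∉ DesG γ := by
          intro hd
          rw [if_pos hd] at h3
          simp only [hgdef] at hfeq
          omega
        have hne : (entry γ i).1 ≠ (entry γ j).1 := by
          have hij' : i ≠ j := by intro h; rw [h] at hij; omega
          have : γ.1 i ≠ γ.1 j := fun h => hij' (γ.1.injective h)
          simp only [entry]
          intro h
          exact this (Fin.ext (by omega))
        rcases clt_total' hne with h | h
        · exact h
        · exact absurd ((mem_DesG_succ γ i j hij).2 h) hnd
    have hπf : π f = γ := ((hπ f hvalid).2 γ hpi).symm
    have hLf : lamZ f (π f) = lam := by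
      funext i
      rw [hπf, lamZ_eq, hf1]
      simp only [hgdef]
      have := hpos i
      push_cast
      omega
    exact ⟨f, hvalid, by rw [Prod.mk.injEq]; exact ⟨hπf, hLf⟩⟩

end Paper
end

section
/- The sequence λ(f) defined by λ_i := f_{σ(i)} − #{j ∈ Des_G(π(f)) : j ≤ i−1} for 1 ≤ i ≤ n (where π(f) = (c_1,...,c_n;σ)) is a nondecreasing sequence of nonnegative integers, i.e. a partition in P_n, for every f ∈ N_0^{(r,n)}. -/
open Finset

namespace Paper

variable {r n : ℕ}

/-- Lemma 3.4: the sequence `λ(f)` is a nondecreasing sequence of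
nonnegative integers, i.e. a partition in `P_n`, for every `f ∈ N_0^{(r,n)}`. -/
theorem stmt2 (r n : ℕ) (hr : 0 < r)
    (π : CSeq r n → CPerm r n)
    (hπ : ∀ f, ValidSeq f → isPi f (π f) ∧ ∀ γ, isPi f γ → γ = π f)
    (f : CSeq r n) (hf : ValidSeq f) :
    Monotone (lamZ f (π f)) ∧ ∀ i, 0 ≤ lamZ f (π f) i := by
  obtain ⟨h1, h2, h3⟩ := (hπ f hf).1
  set γ := π f with hγ
  have asymm : ∀ a b : ℕ × ℕ, clt a b → ¬ clt b a := by
    intro a b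
    unfold clt
    omega
  -- single step
  have step : ∀ (i j : Fin n), (i : ℕ) + 1 = (j : ℕ) → lamZ f γ i ≤ lamZ f γ j := by
    intro i j hij
    have hle : f.1 (γ.1 i) ≤ f.1 (γ.1 j) := h1 i j (by rw [Fin.le_def]; omega)
    by_cases hd : (j : ℕ) ∈ DesG γ
    · -- strict increase of f, card increases by at most 1
      have hne : f.1 (γ.1 i) ≠ f.1 (γ.1 j) := by
        intro he
        have hc := h3 i j hij he
        simp only [DesG, mem_filter, mem_range] at hd
        have hw1 : wval γ (j : ℕ) = entry γ i := by
          unfold wval entry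
          rw [dif_pos ⟨by omega, by omega⟩]
          have : (⟨(j : ℕ) - 1, by omega⟩ : Fin n) = i := by
            apply Fin.ext; simp; omega
          rw [this]
        have hw2 : wval γ ((j : ℕ) + 1) = entry γ j := by
          unfold wval entry
          rw [dif_pos ⟨by omega, by omega⟩]
          have : (⟨(j : ℕ) + 1 - 1, by omega⟩ : Fin n) = j := by
            apply Fin.ext; simp
          rw [this]
        rw [hw1, hw2] at hd
        exact asymm _ _ hc hd.2
      have hsub : (DesG γ).filter (· ≤ (j : ℕ)) ⊆
          insert (j : ℕ) ((DesG γ).filter (· ≤ (i : ℕ))) := by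
        intro x hx
        simp only [mem_filter, mem_insert] at *
        rcases hx with ⟨hx1, hx2⟩
        rcases Nat.lt_or_ge x (j : ℕ) with h | h
        · exact Or.inr ⟨hx1, by omega⟩
        · exact Or.inl (by omega)
      have hcard : ((DesG γ).filter (· ≤ (j : ℕ))).card ≤
          ((DesG γ).filter (· ≤ (i : ℕ))).card + 1 := by
        calc ((DesG γ).filter (· ≤ (j : ℕ))).card
            ≤ (insert (j : ℕ) ((DesG γ).filter (· ≤ (i : ℕ)))).card := card_le_card hsub
          _ ≤ _ := card_insert_le _ _
      unfold lamZ
      omega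
    · have hfe : (DesG γ).filter (· ≤ (j : ℕ)) = (DesG γ).filter (· ≤ (i : ℕ)) := by
        ext x
        simp only [mem_filter, and_congr_right_iff]
        intro hx
        have hxj : x ≠ (j : ℕ) := fun h => hd (h ▸ hx)
        omega
      unfold lamZ
      rw [hfe]
      have : (f.1 (γ.1 i) : ℤ) ≤ (f.1 (γ.1 j) : ℤ) := by exact_mod_cast hle
      omega
  have key : ∀ k : ℕ, ∀ a b : Fin n, (a : ℕ) + k = (b : ℕ) → lamZ f γ a ≤ lamZ f γ b := by
    intro k
    induction k with
    | zero =>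
        intro a b hab
        have : a = b := Fin.ext (by omega)
        rw [this]
    | succ k ih =>
        intro a b hab
        have hk : (a : ℕ) + k < n := by have := b.isLt; omega
        have := ih a ⟨(a : ℕ) + k, hk⟩ rfl
        exact le_trans this (step ⟨(a : ℕ) + k, hk⟩ b (by simp; omega))
  have hmono : Monotone (lamZ f γ) := by
    intro a b hab
    exact key ((b : ℕ) - (a : ℕ)) a b (by have := (Fin.le_def.mp hab); omega)
  refine ⟨hmono, ?_⟩
  intro i
  have hn : 0 < n := i.pos
  set z : Fin n := ⟨0, hn⟩ with hz
  have hzi : lamZ f γ z ≤ lamZ f γ i := hmono (by rw [Fin.le_def, hz]; exact Nat.zero_le _)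
  have h0 : 0 ≤ lamZ f γ z := by
    have hsub : (DesG γ).filter (· ≤ (z : ℕ)) ⊆ {0} := by
      intro x hx
      simp only [mem_filter, mem_singleton, hz] at *
      omega
    have hcard : ((DesG γ).filter (· ≤ (z : ℕ))).card ≤ 1 := by
      simpa using card_le_card hsub
    by_cases h0d : 0 ∈ DesG γ
    · simp only [DesG, mem_filter, mem_range] at h0d
      have e0 : wval γ 0 = ((0 : ℕ), (0 : ℕ)) := by
        unfold wval
        rw [dif_neg (by omega)]
      have e1 : wval γ 1 = ((γ.1 z : ℕ) + 1, (γ.2 z : ℕ)) := by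
        unfold wval
        rw [dif_pos ⟨le_refl 1, hn⟩]
      rw [e0, e1] at h0d
      have hc2 : 0 < (γ.2 z : ℕ) := by
        rcases h0d.2 with h | h | h
        · exact h.1
        · omega
        · omega
      have hfz : f.1 (γ.1 z) ≠ 0 := by
        intro h
        have := hf (γ.1 z) h
        rw [h2 z] at hc2
        omega
      unfold lamZ
      omega
    · have hfe : (DesG γ).filter (· ≤ (z : ℕ)) = ∅ := by
        ext x
        simp only [mem_filter, notMem_empty, iff_false, hz]
        rintro ⟨hx, hxle⟩
        have : x = 0 := by omega
        exact h0d (this ▸ hx)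
      unfold lamZ
      rw [hfe]
      simp
  exact le_trans h0 hzi

end Paper
end

section
/- Let φ: G(r,n) → B_n be the color-forgetting projection sending (c_1,...,c_n;σ) to (ĉ_1,...,ĉ_n;σ) where ĉ_i = 0 if c_i = 0 and ĉ_i = 1 if c_i ≥ 1. Then for every γ ∈ G(r,n): Des_G(γ) = Des_B(φ(γ)) and Des_G(γ^{-1}) = Des_B(φ(γ)^{-1}). -/
open Finset

namespace Paper

variable {r n : ℕ}

lemma clt_iff_of_ne {v w c c' d d' : ℕ} (hv : v ≠ w) (hc : c = 0 ↔ c' = 0)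
    (hd : d = 0 ↔ d' = 0) : clt (v, c) (w, d) ↔ clt (v, c') (w, d') := by
  unfold clt
  omega

lemma DesG_congr {r s n : ℕ} (γ : CPerm r n) (δ : CPerm s n) (h1 : γ.1 = δ.1)
    (h2 : ∀ i, ((γ.2 i : ℕ) = 0 ↔ (δ.2 i : ℕ) = 0)) : DesG γ = DesG δ := by
  unfold DesG
  apply Finset.filter_congr
  intro i hi
  simp only [Finset.mem_range] at hi
  have hw : ∀ j : ℕ, 1 ≤ j → j ≤ n → ∀ (h : j - 1 < n),
      wval γ j = ((γ.1 ⟨j - 1, h⟩ : ℕ) + 1, (γ.2 ⟨j - 1, h⟩ : ℕ)) ∧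
      wval δ j = ((δ.1 ⟨j - 1, h⟩ : ℕ) + 1, (δ.2 ⟨j - 1, h⟩ : ℕ)) := by
    intro j hj1 hj2 h
    constructor <;> · rw [wval, dif_pos ⟨hj1, hj2⟩]
  have h1' : ∀ j, γ.1 j = δ.1 j := fun j => by rw [h1]
  rcases Nat.eq_zero_or_pos i with rfl | hpos
  · have hlt : (0 : ℕ) < n := hi
    obtain ⟨e1, e2⟩ := hw 1 le_rfl hlt (by omega)
    have h0 : wval γ 0 = (0, 0) := by rw [wval, dif_neg]; omega
    have h0' : wval δ 0 = (0, 0) := by rw [wval, dif_neg]; omega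
    rw [e1, e2, h0, h0', h1']
    exact clt_iff_of_ne (by omega) (h2 _) Iff.rfl
  · have hi1 : i - 1 < n := by omega
    have hi2 : i + 1 - 1 < n := by omega
    obtain ⟨e1, e2⟩ := hw (i + 1) (by omega) (by omega) hi2
    obtain ⟨f1, f2⟩ := hw i (by omega) (by omega) hi1
    rw [e1, e2, f1, f2, h1', h1']
    refine clt_iff_of_ne ?_ (h2 _) (h2 _)
    have hne : (⟨i + 1 - 1, hi2⟩ : Fin n) ≠ ⟨i - 1, hi1⟩ := by
      simp only [ne_eq, Fin.mk.injEq]; omega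
    have := (δ.1.injective.ne hne)
    simp only [ne_eq, Fin.val_inj] at this ⊢
    omega

/-- Lemma 3.12, parts 1 and 2: for the color-forgetting projection
`φ : G(r,n) → B_n`, `Des_G(γ) = Des_B(φ(γ))` and `Des_G(γ⁻¹) = Des_B(φ(γ)⁻¹)`. -/
theorem stmt5 (r n : ℕ) (hr : 2 ≤ r) (γ : CPerm r n) :
    DesG γ = DesG (phi γ) ∧ DesG (cinv γ) = DesG (cinv (phi γ)) := by
  constructor
  · refine DesG_congr γ (phi γ) rfl (fun i => ?_)
    show (γ.2 i : ℕ) = 0 ↔ min (γ.2 i : ℕ) 1 = 0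
    omega
  · refine DesG_congr (cinv γ) (cinv (phi γ)) rfl (fun i => ?_)
    show (r - (γ.2 (γ.1⁻¹ i) : ℕ)) % r = 0 ↔
      (2 - min (γ.2 (γ.1⁻¹ i) : ℕ) 1) % 2 = 0
    have h1 : (γ.2 (γ.1⁻¹ i) : ℕ) < r := (γ.2 (γ.1⁻¹ i)).isLt
    have h2 : (r - (γ.2 (γ.1⁻¹ i) : ℕ)) % r = 0 ↔ (γ.2 (γ.1⁻¹ i) : ℕ) = 0 := by
      rcases Nat.eq_zero_or_pos (γ.2 (γ.1⁻¹ i) : ℕ) with h | h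
      · rw [h]; simp
      · rw [Nat.mod_eq_of_lt (by omega)]; omega
    rw [h2]
    omega

end Paper
end

section
/- Let φ: G(r,n) → B_n be the color-forgetting projection. For any fixed signed permutation γ̂ ∈ B_n, one has Σ_{γ ∈ G(r,n), φ(γ)=γ̂} p^{ℓ_G(γ)} a^{col(γ)} = p^{ℓ_B(γ̂)} (a[r−1]_{ap})^{neg(γ̂)}, where [r−1]_{ap} = 1 + ap + ... + (ap)^{r−2}, col(γ) = Σ_i c_i, neg(γ̂) is the number of entries of γ̂ with color 1, and ℓ_G(γ) = inv(γ) + Σ_{c_i≠0}(σ(i) + c_i − 1) with inv(γ) the number of pairs i<j with γ(i)>γ(j) in the colored order. -/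
open Finset

namespace Paper

variable {r n : ℕ}

lemma clt_min (a b : ℕ × ℕ) (hab : a.1 ≠ b.1) :
    clt (a.1, min a.2 1) (b.1, min b.2 1) ↔ clt a b := by
  unfold clt; dsimp only; omega

lemma invG_phi (γ : CPerm r n) : invG (phi γ) = invG γ := by
  unfold invG
  congr 1
  apply Finset.filter_congr
  intro q _
  refine and_congr_right fun hlt => ?_
  have hne : (γ.1 q.2 : ℕ) + 1 ≠ (γ.1 q.1 : ℕ) + 1 := by
    have : γ.1 q.2 ≠ γ.1 q.1 := γ.1.injective.ne (ne_of_gt hlt)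
    simpa [Fin.val_eq_val] using this
  have := clt_min (entry γ q.2) (entry γ q.1) hne
  simpa [entry, phi] using this

lemma phi_fst (γ : CPerm r n) : (phi γ).1 = γ.1 := rfl

/-- Lemma 3.12, part 3: for any `γ̂ ∈ B_n`,
`Σ_{γ ∈ G(r,n), φ(γ)=γ̂} p^{ℓ_G(γ)} a^{col(γ)} = p^{ℓ_B(γ̂)} (a[r−1]_{ap})^{neg(γ̂)}`,
as polynomials in `p = X 0` and `a = X 1`. (For `γ̂ ∈ B_n`, `neg(γ̂) = col(γ̂)`.) -/
theorem stmt6 (r n : ℕ) (hr : 2 ≤ r) (γ' : CPerm 2 n) :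
    ∑ γ ∈ univ.filter (fun γ : CPerm r n => phi γ = γ'),
        (MvPolynomial.X 0 : MvPolynomial (Fin 2) ℤ) ^ lenG γ * (MvPolynomial.X 1) ^ colG γ =
      (MvPolynomial.X 0 : MvPolynomial (Fin 2) ℤ) ^ lenG γ' *
        (MvPolynomial.X 1 * qint (MvPolynomial.X 1 * MvPolynomial.X 0) (r - 1)) ^ colG γ' := by
  classical
  set p : MvPolynomial (Fin 2) ℤ := MvPolynomial.X 0 with hp
  set a : MvPolynomial (Fin 2) ℤ := MvPolynomial.X 1 with ha
  set Q : MvPolynomial (Fin 2) ℤ := a * qint (a * p) (r - 1) with hQ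
  set S : Fin n → Finset (Fin r) :=
    fun i => univ.filter (fun c : Fin r => min (c : ℕ) 1 = (γ'.2 i : ℕ)) with hS
  set g : Fin n → Fin r → MvPolynomial (Fin 2) ℤ :=
    fun i c => p ^ (if (c : ℕ) = 0 then 0 else (γ'.1 i : ℕ) + (c : ℕ)) * a ^ (c : ℕ) with hg
  -- membership in the fiber
  have hmem : ∀ γ : CPerm r n, phi γ = γ' ↔
      (γ.1 = γ'.1 ∧ ∀ i, min ((γ.2 i : ℕ)) 1 = (γ'.2 i : ℕ)) := by
    intro γ
    constructor
    · intro h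
      constructor
      · rw [← h]; rfl
      · intro i
        have : (phi γ).2 i = γ'.2 i := by rw [h]
        simpa [phi, Fin.ext_iff] using this
    · rintro ⟨h1, h2⟩
      refine Prod.ext h1 ?_
      funext i
      exact Fin.ext (by simpa [phi] using h2 i)
  -- LHS = p^{invG γ'} * ∏ ∑
  have key : ∑ γ ∈ univ.filter (fun γ : CPerm r n => phi γ = γ'), p ^ lenG γ * a ^ colG γ
      = p ^ invG γ' * ∏ i, ∑ c ∈ S i, g i c := by
    rw [Finset.prod_univ_sum, Finset.mul_sum]
    refine Finset.sum_nbij' (fun γ => γ.2) (fun c => (γ'.1, c)) ?_ ?_ ?_ ?_ ?_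
    · intro γ hγ
      rw [Finset.mem_filter] at hγ
      rw [Fintype.mem_piFinset]
      intro i
      rw [hS]; simp only [Finset.mem_filter, Finset.mem_univ, true_and]
      exact ((hmem γ).1 hγ.2).2 i
    · intro c hc
      rw [Fintype.mem_piFinset] at hc
      rw [Finset.mem_filter]
      refine ⟨Finset.mem_univ _, (hmem _).2 ⟨rfl, fun i => ?_⟩⟩
      have := hc i
      rw [hS] at this
      simpa using this
    · intro γ hγ
      rw [Finset.mem_filter] at hγ
      exact Prod.ext (((hmem γ).1 hγ.2).1).symm rfl
    · intro c hc; rfl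
    · intro γ hγ
      rw [Finset.mem_filter] at hγ
      have hfst : γ.1 = γ'.1 := ((hmem γ).1 hγ.2).1
      have hinv : invG γ = invG γ' := by rw [← invG_phi γ, hγ.2]
      have hlen : lenG γ = invG γ' + ∑ i,
          (if (γ.2 i : ℕ) = 0 then 0 else (γ'.1 i : ℕ) + (γ.2 i : ℕ)) := by
        unfold lenG
        rw [hinv, ← hfst]
        congr 1
        rw [Finset.sum_filter]
        apply Finset.sum_congr rfl
        intro i _
        by_cases h : (γ.2 i : ℕ) = 0 <;> simp [h]
      rw [hlen, pow_add, hg]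
      unfold colG
      rw [← Finset.prod_pow_eq_pow_sum, ← Finset.prod_pow_eq_pow_sum, mul_assoc,
        ← Finset.prod_mul_distrib]
  rw [key]
  -- evaluate each factor
  have hfac : ∀ i : Fin n, ∑ c ∈ S i, g i c =
      p ^ (if (γ'.2 i : ℕ) = 0 then 0 else (γ'.1 i : ℕ) + 1) * Q ^ (γ'.2 i : ℕ) := by
    intro i
    have h2 : (γ'.2 i : ℕ) = 0 ∨ (γ'.2 i : ℕ) = 1 := by omega
    rcases h2 with h | h
    · -- only c = 0 in S i
      have hSi : S i = {(⟨0, by omega⟩ : Fin r)} := by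
        rw [hS]
        ext c
        simp only [Finset.mem_filter, Finset.mem_univ, true_and, Finset.mem_singleton, h,
          Fin.ext_iff]
        omega
      rw [hSi, Finset.sum_singleton, h, hg]
      simp
    · -- c ranges over nonzero colors
      have hSi : S i = univ.filter (fun c : Fin r => (c : ℕ) ≠ 0) := by
        rw [hS]
        ext c
        simp only [Finset.mem_filter, Finset.mem_univ, true_and, h]
        omega
      rw [hSi, h]
      have hsum : ∑ c ∈ univ.filter (fun c : Fin r => (c : ℕ) ≠ 0), g i c
          = ∑ k ∈ range r, (if k = 0 then 0 else p ^ ((γ'.1 i : ℕ) + k) * a ^ k) := by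
        rw [Finset.sum_filter]
        rw [Fin.sum_univ_eq_sum_range
          (fun k => if k ≠ 0 then p ^ (if k = 0 then 0 else (γ'.1 i : ℕ) + k) * a ^ k else 0)]
        apply Finset.sum_congr rfl
        intro k _
        by_cases hk : k = 0 <;> simp [hk, hg]
      rw [hsum]
      have hrhs : (p ^ if (1:ℕ) = 0 then 0 else (γ'.1 i : ℕ) + 1) * Q ^ (1:ℕ)
          = p ^ ((γ'.1 i : ℕ) + 1) * (a * ∑ j ∈ range (r - 1), (a * p) ^ j) := by
        rw [if_neg one_ne_zero, pow_one, hQ, qint]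
      rw [hrhs]
      obtain ⟨m, hm⟩ : ∃ m, r = m + 1 := ⟨r - 1, by omega⟩
      have hr1 : r - 1 = m := by omega
      rw [hm, Nat.add_sub_cancel, Finset.sum_range_succ', if_pos rfl, add_zero, Finset.mul_sum,
        Finset.mul_sum]
      apply Finset.sum_congr rfl
      intro k _
      rw [if_neg (Nat.succ_ne_zero k)]
      ring
  rw [Finset.prod_congr rfl (fun i _ => hfac i), Finset.prod_mul_distrib,
    Finset.prod_pow_eq_pow_sum, Finset.prod_pow_eq_pow_sum]
  have hlen' : lenG γ' = invG γ' + ∑ i,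
      (if (γ'.2 i : ℕ) = 0 then 0 else (γ'.1 i : ℕ) + 1) := by
    unfold lenG
    congr 1
    rw [Finset.sum_filter]
    apply Finset.sum_congr rfl
    intro i _
    have : (γ'.2 i : ℕ) = 0 ∨ (γ'.2 i : ℕ) = 1 := by omega
    rcases this with h | h <;> simp [h]
  rw [hlen', colG, pow_add]
  ring

end Paper
end

section
/- For every positive integers r, n, the joint distribution of length and color weight over G(r,n) is given by Σ_{γ ∈ G(r,n)} p^{ℓ_G(γ)} a^{col(γ)} = [n]_p! · Π_{i=1}^n (1 + a p^i [r−1]_{ap}), where [n]_p! = Π_{j=1}^n (1+p+...+p^{j−1}) and [r−1]_{ap} = 1 + (ap) + ... + (ap)^{r−2}. -/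
open Finset

namespace Paper

variable {r n : ℕ}

/-! ### Auxiliary development for Statement 8 -/

section Stmt8Aux

/-- The color of the *value* `w` (0-based) in `γ`. -/
def Cf (γ : CPerm r n) (w : Fin n) : ℕ := (γ.2 (γ.1⁻¹ w) : ℕ)

/-- Number of values smaller than `w` appearing before `w`. -/
def Kf (γ : CPerm r n) (w : Fin n) : ℕ :=
  ((univ : Finset (Fin n)).filter fun u => u < w ∧ γ.1⁻¹ u < γ.1⁻¹ w).card

/-- Number of values smaller than `w` appearing after `w`. -/
def Lf (γ : CPerm r n) (w : Fin n) : ℕ :=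
  ((univ : Finset (Fin n)).filter fun u => u < w ∧ γ.1⁻¹ w < γ.1⁻¹ u).card

/-- Number of values larger than `w` appearing before `w`. -/
def Mf (γ : CPerm r n) (w : Fin n) : ℕ :=
  ((univ : Finset (Fin n)).filter fun u => w < u ∧ γ.1⁻¹ u < γ.1⁻¹ w).card

lemma card_filter_lt_fin (w : Fin n) :
    ((univ : Finset (Fin n)).filter fun u => u < w).card = (w : ℕ) := by
  have h : ((univ : Finset (Fin n)).filter fun u => u < w) = Finset.Iio w := by
    ext u; simp
  rw [h, Fin.card_Iio]

lemma Kf_add_Lf (γ : CPerm r n) (w : Fin n) : Kf γ w + Lf γ w = (w : ℕ) := by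
  classical
  have h1 : ((univ : Finset (Fin n)).filter fun u => u < w ∧ γ.1⁻¹ u < γ.1⁻¹ w)
      = ((univ : Finset (Fin n)).filter fun u => u < w).filter
          (fun u => γ.1⁻¹ u < γ.1⁻¹ w) := by
    rw [Finset.filter_filter]
  have h2 : ((univ : Finset (Fin n)).filter fun u => u < w ∧ γ.1⁻¹ w < γ.1⁻¹ u)
      = ((univ : Finset (Fin n)).filter fun u => u < w).filter
          (fun u => ¬ γ.1⁻¹ u < γ.1⁻¹ w) := by
    rw [Finset.filter_filter]
    apply Finset.filter_congr
    intro u _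
    constructor
    · rintro ⟨h1, h2⟩; exact ⟨h1, not_lt_of_gt h2⟩
    · rintro ⟨h1, h2⟩
      refine ⟨h1, lt_of_le_of_ne (not_lt.mp h2) ?_⟩
      intro hEq
      exact absurd (γ.1⁻¹.injective hEq) (ne_of_lt h1).symm
  rw [Kf, Lf, h1, h2, Finset.card_filter_add_card_filter_not, card_filter_lt_fin]

lemma Kf_le (γ : CPerm r n) (w : Fin n) : Kf γ w ≤ (w : ℕ) := by
  have := Kf_add_Lf γ w; omega

lemma Lf_eq (γ : CPerm r n) (w : Fin n) : Lf γ w = (w : ℕ) - Kf γ w := by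
  have := Kf_add_Lf γ w; omega

lemma pos_eq_Kf_add_Mf (γ : CPerm r n) (w : Fin n) :
    (γ.1⁻¹ w : ℕ) = Kf γ w + Mf γ w := by
  classical
  have h1 : ((univ : Finset (Fin n)).filter fun u => γ.1⁻¹ u < γ.1⁻¹ w).card
      = (γ.1⁻¹ w : ℕ) := by
    rw [Finset.card_equiv (γ.1⁻¹ : Equiv.Perm (Fin n)) (t := Finset.Iio (γ.1⁻¹ w))
      (fun u => by simp), Fin.card_Iio]
  have h2 : ((univ : Finset (Fin n)).filter fun u => γ.1⁻¹ u < γ.1⁻¹ w)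
      = ((univ : Finset (Fin n)).filter fun u => u < w ∧ γ.1⁻¹ u < γ.1⁻¹ w)
        ∪ ((univ : Finset (Fin n)).filter fun u => w < u ∧ γ.1⁻¹ u < γ.1⁻¹ w) := by
    ext u
    simp only [Finset.mem_filter, Finset.mem_union, Finset.mem_univ, true_and]
    constructor
    · intro h
      rcases lt_trichotomy u w with h' | h' | h'
      · exact Or.inl ⟨h', h⟩
      · subst h'; exact absurd h (lt_irrefl _)
      · exact Or.inr ⟨h', h⟩
    · rintro (⟨_, h⟩ | ⟨_, h⟩) <;> exact h
  have hdisj : Disjoint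
      ((univ : Finset (Fin n)).filter fun u => u < w ∧ γ.1⁻¹ u < γ.1⁻¹ w)
      ((univ : Finset (Fin n)).filter fun u => w < u ∧ γ.1⁻¹ u < γ.1⁻¹ w) := by
    rw [Finset.disjoint_left]
    intro u hu1 hu2
    simp only [Finset.mem_filter, Finset.mem_univ, true_and] at hu1 hu2
    exact absurd hu2.1 (not_lt_of_gt hu1.1)
  rw [← h1, h2, Finset.card_union_of_disjoint hdisj, Kf, Mf]

/-- The set of "value inversions". -/
def Tset (γ : CPerm r n) : Finset (Fin n × Fin n) :=
  (univ : Finset (Fin n × Fin n)).filter fun q =>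
    γ.1⁻¹ q.1 < γ.1⁻¹ q.2 ∧ clt ((q.2 : ℕ) + 1, Cf γ q.2) ((q.1 : ℕ) + 1, Cf γ q.1)

lemma invG_eq_Tcard (γ : CPerm r n) : invG γ = (Tset γ).card := by
  rw [invG, Tset]
  apply Finset.card_equiv (Equiv.prodCongr γ.1 γ.1)
  intro q
  rw [Finset.mem_filter, Finset.mem_filter]
  simp only [Finset.mem_filter, Finset.mem_univ, true_and, Equiv.prodCongr_apply, Prod.map,
    entry, Cf, Equiv.Perm.coe_inv, Equiv.symm_apply_apply, Equiv.apply_eq_iff_eq]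

lemma Tcard_fiber (γ : CPerm r n) (w : Fin n) :
    (((Tset γ)).filter fun q => max q.1 q.2 = w).card
      = if Cf γ w = 0 then (w : ℕ) - Kf γ w else Kf γ w := by
  classical
  have hposne : ∀ q : Fin n × Fin n, γ.1⁻¹ q.1 < γ.1⁻¹ q.2 → q.1 ≠ q.2 := by
    intro q h hEq
    rw [hEq] at h; exact lt_irrefl _ h
  by_cases hc : Cf γ w = 0
  · -- fiber = {(w,u) : u < w, pos w < pos u}
    rw [if_pos hc, ← Lf_eq]
    refine Finset.card_bij' (fun q _ => q.2) (fun u _ => (w, u)) ?hi ?hj ?li ?ri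
    case hi =>
      intro q hq
      simp only [Tset, Finset.mem_filter, Finset.mem_univ, true_and] at hq
      obtain ⟨⟨hpos, hclt⟩, hmax⟩ := hq
      have hne : q.1 ≠ q.2 := hposne q hpos
      have h1w : q.1 = w := by
        by_contra h1w
        have h2w : q.2 = w := by
          rcases max_choice q.1 q.2 with h | h <;> rw [h] at hmax
          · exact absurd hmax h1w
          · exact hmax
        rw [h2w] at hclt
        have hlt : q.1 < w := by
          have : q.1 ≤ max q.1 q.2 := le_max_left _ _
          rw [hmax] at this
          exact lt_of_le_of_ne this h1w
        have hlt' : (q.1 : ℕ) < (w : ℕ) := hlt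
        simp only [clt, hc] at hclt
        omega
      have h2lt : q.2 < w := by
        have : q.2 ≤ max q.1 q.2 := le_max_right _ _
        rw [hmax] at this
        exact lt_of_le_of_ne this (by rw [← h1w]; exact hne.symm)
      simp only [Finset.mem_filter, Finset.mem_univ, true_and]
      exact ⟨h2lt, by rw [← h1w]; exact hpos⟩
    case hj =>
      intro u hu
      simp only [Finset.mem_filter, Finset.mem_univ, true_and] at hu
      obtain ⟨hlt, hpos⟩ := hu
      simp only [Tset, Finset.mem_filter, Finset.mem_univ, true_and]
      refine ⟨⟨hpos, ?_⟩, max_eq_left (le_of_lt hlt)⟩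
      have hlt' : (u : ℕ) < (w : ℕ) := hlt
      rcases Nat.eq_zero_or_pos (Cf γ u) with h | h
      · exact Or.inr (Or.inr ⟨h, hc, by omega⟩)
      · exact Or.inl ⟨h, hc⟩
    case li =>
      intro q hq
      simp only [Tset, Finset.mem_filter, Finset.mem_univ, true_and] at hq
      obtain ⟨⟨hpos, hclt⟩, hmax⟩ := hq
      have hne : q.1 ≠ q.2 := hposne q hpos
      have h1w : q.1 = w := by
        by_contra h1w
        have h2w : q.2 = w := by
          rcases max_choice q.1 q.2 with h | h <;> rw [h] at hmax
          · exact absurd hmax h1w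
          · exact hmax
        rw [h2w] at hclt
        have hlt : q.1 < w := by
          have : q.1 ≤ max q.1 q.2 := le_max_left _ _
          rw [hmax] at this
          exact lt_of_le_of_ne this h1w
        have hlt' : (q.1 : ℕ) < (w : ℕ) := hlt
        simp only [clt, hc] at hclt
        omega
      exact Prod.ext h1w.symm rfl
    case ri =>
      intro u _
      rfl
  · -- fiber = {(u,w) : u < w, pos u < pos w}
    rw [if_neg hc]
    refine Finset.card_bij' (fun q _ => q.1) (fun u _ => (u, w)) ?hi ?hj ?li ?ri
    case hi =>
      intro q hq
      simp only [Tset, Finset.mem_filter, Finset.mem_univ, true_and] at hq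
      obtain ⟨⟨hpos, hclt⟩, hmax⟩ := hq
      have hne : q.1 ≠ q.2 := hposne q hpos
      have h2w : q.2 = w := by
        by_contra h2w
        have h1w : q.1 = w := by
          rcases max_choice q.1 q.2 with h | h <;> rw [h] at hmax
          · exact hmax
          · exact absurd hmax h2w
        rw [h1w] at hclt
        have hlt : q.2 < w := by
          have : q.2 ≤ max q.1 q.2 := le_max_right _ _
          rw [hmax] at this
          exact lt_of_le_of_ne this h2w
        have hlt' : (q.2 : ℕ) < (w : ℕ) := hlt
        simp only [clt] at hclt
        omega
      have h1lt : q.1 < w := by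
        have : q.1 ≤ max q.1 q.2 := le_max_left _ _
        rw [hmax] at this
        exact lt_of_le_of_ne this (by rw [← h2w]; exact hne)
      simp only [Finset.mem_filter, Finset.mem_univ, true_and]
      exact ⟨h1lt, by rw [← h2w]; exact hpos⟩
    case hj =>
      intro u hu
      simp only [Finset.mem_filter, Finset.mem_univ, true_and] at hu
      obtain ⟨hlt, hpos⟩ := hu
      simp only [Tset, Finset.mem_filter, Finset.mem_univ, true_and]
      refine ⟨⟨hpos, ?_⟩, max_eq_right (le_of_lt hlt)⟩
      have hlt' : (u : ℕ) < (w : ℕ) := hlt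
      have hcw : 0 < Cf γ w := Nat.pos_of_ne_zero hc
      rcases Nat.eq_zero_or_pos (Cf γ u) with h | h
      · exact Or.inl ⟨hcw, h⟩
      · exact Or.inr (Or.inl ⟨hcw, h, Or.inl (by omega)⟩)
    case li =>
      intro q hq
      simp only [Tset, Finset.mem_filter, Finset.mem_univ, true_and] at hq
      obtain ⟨⟨hpos, hclt⟩, hmax⟩ := hq
      have hne : q.1 ≠ q.2 := hposne q hpos
      have h2w : q.2 = w := by
        by_contra h2w
        have h1w : q.1 = w := by
          rcases max_choice q.1 q.2 with h | h <;> rw [h] at hmax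
          · exact hmax
          · exact absurd hmax h2w
        rw [h1w] at hclt
        have hlt : q.2 < w := by
          have : q.2 ≤ max q.1 q.2 := le_max_right _ _
          rw [hmax] at this
          exact lt_of_le_of_ne this h2w
        have hlt' : (q.2 : ℕ) < (w : ℕ) := hlt
        simp only [clt] at hclt
        omega
      exact Prod.ext rfl h2w.symm
    case ri =>
      intro u _
      rfl

lemma invG_eq_sum (γ : CPerm r n) :
    invG γ = ∑ w : Fin n, (if Cf γ w = 0 then (w : ℕ) - Kf γ w else Kf γ w) := by
  classical
  rw [invG_eq_Tcard,
    Finset.card_eq_sum_card_fiberwise (f := fun q : Fin n × Fin n => max q.1 q.2)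
      (t := univ) (fun x _ => Finset.mem_univ _)]
  exact Finset.sum_congr rfl fun w _ => Tcard_fiber γ w

lemma lenG_eq_sum (γ : CPerm r n) :
    lenG γ = ∑ w : Fin n,
      (if Cf γ w = 0 then (w : ℕ) - Kf γ w else Kf γ w + (w : ℕ) + Cf γ w) := by
  classical
  rw [lenG, invG_eq_sum]
  have h2 : ∑ i ∈ univ.filter (fun i => (γ.2 i : ℕ) ≠ 0), ((γ.1 i : ℕ) + (γ.2 i : ℕ))
      = ∑ w : Fin n, (if Cf γ w = 0 then 0 else (w : ℕ) + Cf γ w) := by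
    rw [Finset.sum_filter]
    apply Fintype.sum_equiv γ.1
    intro i
    by_cases h : (γ.2 i : ℕ) = 0 <;>
      simp [Cf, Equiv.Perm.coe_inv, Equiv.symm_apply_apply, h]
  rw [h2, ← Finset.sum_add_distrib]
  apply Finset.sum_congr rfl
  intro w _
  by_cases h : Cf γ w = 0 <;> simp [h] <;> omega

lemma colG_eq_sum (γ : CPerm r n) : colG γ = ∑ w : Fin n, Cf γ w := by
  apply Fintype.sum_equiv γ.1
  intro i
  simp [Cf, Equiv.Perm.coe_inv, Equiv.symm_apply_apply]

/-- The code map. -/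
def codeF (γ : CPerm r n) : ∀ w : Fin n, Fin ((w : ℕ) + 1) × Fin r :=
  fun w => (⟨Kf γ w, Nat.lt_succ_of_le (Kf_le γ w)⟩, γ.2 (γ.1⁻¹ w))

lemma core_not_lt (γ δ : CPerm r n) (w : Fin n) (hK : Kf γ w = Kf δ w)
    (hgt : ∀ u, w < u → γ.1⁻¹ u = δ.1⁻¹ u) : ¬ γ.1⁻¹ w < δ.1⁻¹ w := by
  classical
  intro hPQ
  have hPQ' : (γ.1⁻¹ w : ℕ) < (δ.1⁻¹ w : ℕ) := hPQ
  set A := ((univ : Finset (Fin n)).filter fun u => w < u ∧ γ.1⁻¹ u < γ.1⁻¹ w) with hA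
  set B := ((univ : Finset (Fin n)).filter fun u => w < u ∧ γ.1⁻¹ u < δ.1⁻¹ w) with hB
  have hMγ : Mf γ w = A.card := rfl
  have hMδ : Mf δ w = B.card := by
    rw [Mf, hB]
    apply Finset.card_equiv (Equiv.refl _)
    intro u
    simp only [Finset.mem_filter, Finset.mem_univ, true_and, Equiv.refl_apply]
    constructor
    · rintro ⟨h1, h2⟩; exact ⟨h1, by rw [hgt u h1]; exact h2⟩
    · rintro ⟨h1, h2⟩; exact ⟨h1, by rw [← hgt u h1]; exact h2⟩
  have hsub : A ⊆ B := by
    intro u hu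
    simp only [hA, hB, Finset.mem_filter, Finset.mem_univ, true_and] at hu ⊢
    exact ⟨hu.1, lt_trans hu.2 hPQ⟩
  have hdiff : (B \ A).card = B.card - A.card := Finset.card_sdiff_of_subset hsub
  have hbound : (B \ A).card ≤ (Finset.Ioo (γ.1⁻¹ w) (δ.1⁻¹ w)).card := by
    apply Finset.card_le_card_of_injOn (fun u => γ.1⁻¹ u)
    · intro u hu
      simp only [hA, hB, Finset.mem_coe, Finset.mem_sdiff, Finset.mem_filter, Finset.mem_univ, true_and,
        not_and] at hu
      obtain ⟨⟨h1, h2⟩, h3⟩ := hu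
      have h4 : ¬ γ.1⁻¹ u < γ.1⁻¹ w := fun h => h3 h1 h
      have h5 : γ.1⁻¹ u ≠ γ.1⁻¹ w := by
        intro hEq
        exact absurd (γ.1⁻¹.injective hEq) (ne_of_lt h1).symm
      rw [Finset.mem_coe, Finset.mem_Ioo]
      exact ⟨lt_of_le_of_ne (not_lt.mp h4) h5.symm, h2⟩
    · intro u _ v _ h
      exact γ.1⁻¹.injective h
  rw [Fin.card_Ioo] at hbound
  have hcardle : A.card ≤ B.card := Finset.card_le_card hsub
  have e1 := pos_eq_Kf_add_Mf γ w
  have e2 := pos_eq_Kf_add_Mf δ w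
  rw [hMγ] at e1
  rw [hMδ] at e2
  omega

lemma codeF_injective : Function.Injective (codeF : CPerm r n → _) := by
  intro γ δ h
  have hK : ∀ w, Kf γ w = Kf δ w := by
    intro w
    have := congrFun h w
    have := congrArg (fun x : Fin ((w : ℕ) + 1) × Fin r => (x.1 : ℕ)) this
    simpa [codeF] using this
  have hC : ∀ w, γ.2 (γ.1⁻¹ w) = δ.2 (δ.1⁻¹ w) := by
    intro w
    have := congrFun h w
    have := congrArg (fun x : Fin ((w : ℕ) + 1) × Fin r => x.2) this
    simpa [codeF] using this
  have main : ∀ m : ℕ, ∀ w : Fin n, n ≤ (w : ℕ) + m → γ.1⁻¹ w = δ.1⁻¹ w := by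
    intro m
    induction m with
    | zero =>
      intro w hw
      have := w.isLt
      omega
    | succ m ih =>
      intro w hw
      have hgt : ∀ u, w < u → γ.1⁻¹ u = δ.1⁻¹ u := by
        intro u hu
        have hu' : (w : ℕ) < (u : ℕ) := hu
        exact ih u (by omega)
      have h1 := core_not_lt γ δ w (hK w) hgt
      have h2 := core_not_lt δ γ w (hK w).symm (fun u hu => (hgt u hu).symm)
      exact le_antisymm (not_lt.mp h2) (not_lt.mp h1)
  have hinv : γ.1⁻¹ = δ.1⁻¹ := by
    apply Equiv.ext
    intro w
    exact main n w (by omega)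
  have hσ : γ.1 = δ.1 := by
    rwa [inv_inj] at hinv
  have hcol : γ.2 = δ.2 := by
    funext i
    have := hC (γ.1 i)
    rwa [Equiv.Perm.coe_inv, Equiv.symm_apply_apply, hσ, Equiv.Perm.coe_inv,
      Equiv.symm_apply_apply] at this
  exact Prod.ext hσ hcol

lemma codeF_bijective : Function.Bijective (codeF : CPerm r n → _) := by
  rw [Fintype.bijective_iff_injective_and_card]
  refine ⟨codeF_injective, ?_⟩
  rw [Fintype.card_prod, Fintype.card_perm, Fintype.card_fun, Fintype.card_pi]
  simp only [Fintype.card_prod, Fintype.card_fin]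
  rw [Finset.prod_mul_distrib, Finset.prod_const, Finset.card_univ, Fintype.card_fin,
    Fin.prod_univ_eq_prod_range (fun i => i + 1) n,
    Finset.prod_range_add_one_eq_factorial]

end Stmt8Aux

/-- equation (4.10): the joint distribution of length and color weight:
`Σ_{γ ∈ G(r,n)} p^{ℓ_G(γ)} a^{col(γ)} = [n]_p! · Π_{i=1}^n (1 + a p^i [r−1]_{ap})`,
as polynomials in `p = X 0` and `a = X 1`. -/
theorem stmt8 (r n : ℕ) (hr : 0 < r) (hn : 0 < n) :
    ∑ γ : CPerm r n,
        (MvPolynomial.X 0 : MvPolynomial (Fin 2) ℤ) ^ lenG γ * (MvPolynomial.X 1) ^ colG γ =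
      qfact (MvPolynomial.X 0 : MvPolynomial (Fin 2) ℤ) n *
        ∏ i ∈ range n,
          (1 + MvPolynomial.X 1 * (MvPolynomial.X 0) ^ (i + 1) *
            qint (MvPolynomial.X 1 * MvPolynomial.X 0) (r - 1)) := by
  classical
  set p : MvPolynomial (Fin 2) ℤ := MvPolynomial.X 0 with hp
  set a : MvPolynomial (Fin 2) ℤ := MvPolynomial.X 1 with ha
  have key : ∀ γ : CPerm r n,
      p ^ lenG γ * a ^ colG γ
        = ∏ w : Fin n,
            (p ^ (if ((codeF γ w).2 : ℕ) = 0 then (w : ℕ) - ((codeF γ w).1 : ℕ)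
                else ((codeF γ w).1 : ℕ) + (w : ℕ) + ((codeF γ w).2 : ℕ))
              * a ^ ((codeF γ w).2 : ℕ)) := by
    intro γ
    have h1 : ∀ w : Fin n, ((codeF γ w).1 : ℕ) = Kf γ w := fun _ => rfl
    have h2 : ∀ w : Fin n, ((codeF γ w).2 : ℕ) = Cf γ w := fun _ => rfl
    simp only [h1, h2]
    rw [lenG_eq_sum, colG_eq_sum, ← Finset.prod_pow_eq_pow_sum, ← Finset.prod_pow_eq_pow_sum,
      ← Finset.prod_mul_distrib]
  have swap := Finset.prod_univ_sum
    (fun w : Fin n => (univ : Finset (Fin ((w : ℕ) + 1) × Fin r)))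
    (fun w y =>
      p ^ (if ((y.2 : ℕ)) = 0 then (w : ℕ) - (y.1 : ℕ) else (y.1 : ℕ) + (w : ℕ) + (y.2 : ℕ))
        * a ^ (y.2 : ℕ))
  rw [Fintype.piFinset_univ] at swap
  have factor : ∀ m : ℕ,
      (∑ y : Fin (m + 1) × Fin r,
          p ^ (if ((y.2 : ℕ)) = 0 then m - (y.1 : ℕ) else (y.1 : ℕ) + m + (y.2 : ℕ))
            * a ^ (y.2 : ℕ))
        = qint p (m + 1) * (1 + a * p ^ (m + 1) * qint (a * p) (r - 1)) := by
    intro m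
    obtain ⟨r', rfl⟩ : ∃ r', r = r' + 1 := ⟨r - 1, by omega⟩
    rw [Fintype.sum_prod_type, Finset.sum_comm]
    rw [Fin.sum_univ_eq_sum_range (fun c => ∑ k : Fin (m + 1),
      p ^ (if c = 0 then m - (k : ℕ) else (k : ℕ) + m + c) * a ^ c) (r' + 1)]
    rw [Finset.sum_range_succ']
    simp only [Nat.succ_ne_zero, if_false, if_true, Nat.add_sub_cancel, pow_zero, mul_one,
      reduceIte]
    have g0 : (∑ k : Fin (m + 1), p ^ (m - (k : ℕ))) = qint p (m + 1) := by
      rw [Fin.sum_univ_eq_sum_range (fun k => p ^ (m - k)) (m + 1)]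
      unfold qint
      rw [← Finset.sum_range_reflect (fun j => p ^ j) (m + 1)]
      apply Finset.sum_congr rfl
      intro j hj
      congr 1
      all_goals omega
    have gc : ∀ c : ℕ, (∑ k : Fin (m + 1), p ^ ((k : ℕ) + m + (c + 1)) * a ^ (c + 1))
        = qint p (m + 1) * (a * p ^ (m + 1) * (a * p) ^ c) := by
      intro c
      unfold qint
      rw [Fin.sum_univ_eq_sum_range (fun k => p ^ (k + m + (c + 1)) * a ^ (c + 1)) (m + 1),
        Finset.sum_mul]
      apply Finset.sum_congr rfl
      intro j _
      rw [show j + m + (c + 1) = j + ((m + 1) + c) by omega, pow_add, pow_add, mul_pow]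
      ring
    rw [g0, Finset.sum_congr rfl (fun c _ => gc c)]
    generalize qint p (m + 1) = Q
    unfold qint
    rw [add_comm, mul_add, mul_one]
    congr 1
    simp only [Finset.mul_sum]
    all_goals exact Finset.sum_congr rfl fun c _ => by ring
  calc ∑ γ : CPerm r n, p ^ lenG γ * a ^ colG γ
      = ∑ γ : CPerm r n, ∏ w : Fin n,
          (p ^ (if ((codeF γ w).2 : ℕ) = 0 then (w : ℕ) - ((codeF γ w).1 : ℕ)
              else ((codeF γ w).1 : ℕ) + (w : ℕ) + ((codeF γ w).2 : ℕ))
            * a ^ ((codeF γ w).2 : ℕ)) := Finset.sum_congr rfl fun γ _ => key γ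
    _ = ∑ x : ∀ w : Fin n, Fin ((w : ℕ) + 1) × Fin r, ∏ w : Fin n,
          (p ^ (if ((x w).2 : ℕ) = 0 then (w : ℕ) - ((x w).1 : ℕ)
              else ((x w).1 : ℕ) + (w : ℕ) + ((x w).2 : ℕ))
            * a ^ ((x w).2 : ℕ)) :=
        Fintype.sum_bijective codeF codeF_bijective _ _ fun γ => rfl
    _ = ∏ w : Fin n, ∑ y : Fin ((w : ℕ) + 1) × Fin r,
          (p ^ (if ((y.2 : ℕ)) = 0 then (w : ℕ) - (y.1 : ℕ)
              else (y.1 : ℕ) + (w : ℕ) + (y.2 : ℕ)) * a ^ (y.2 : ℕ)) := swap.symm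
    _ = ∏ w : Fin n,
          (qint p ((w : ℕ) + 1) * (1 + a * p ^ ((w : ℕ) + 1) * qint (a * p) (r - 1))) :=
        Finset.prod_congr rfl fun w _ => factor (w : ℕ)
    _ = (∏ w : Fin n, qint p ((w : ℕ) + 1))
          * ∏ w : Fin n, (1 + a * p ^ ((w : ℕ) + 1) * qint (a * p) (r - 1)) :=
        Finset.prod_mul_distrib
    _ = qfact p n * ∏ i ∈ range n, (1 + a * p ^ (i + 1) * qint (a * p) (r - 1)) := by
        congr 1
        · exact Fin.prod_univ_eq_prod_range (fun i => qint p (i + 1)) n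
        · exact Fin.prod_univ_eq_prod_range
            (fun i => 1 + a * p ^ (i + 1) * qint (a * p) (r - 1)) n

end Paper
end
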